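/- Let m ≥ 1, φ ∈ (1,2] the unique real root of ρ^m − ρ^{m−1} − 1, and p⁻ = (φ−1)/(1 + m(φ−1)). Then the function G(m,q) = (1−(m−1)q)·H(q/(1−(m−1)q)) on [0,1/m] attains its maximum at q = p⁻, and G(m,p⁻) = log₂ φ. -/

import Mathlib

/-- Binary entropy function (base 2). -/
noncomputable def binEntropy (p : ℝ) : ℝ := -(p * Real.logb 2 p) - (1 - p) * Real.logb 2 (1 - p)

lemma key_ineq (a c X : ℝ) (ha : 0 ≤ a) (hc : 0 < c) (hX : 0 < X) :
    a * Real.log c - a * Real.log a ≤ a * Real.log X + (c / X - a) := by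
  rcases eq_or_lt_of_le ha with h | h
  · simp [← h]
    positivity
  · have h1 : Real.log (c / (a * X)) ≤ c / (a * X) - 1 :=
      Real.log_le_sub_one_of_pos (by positivity)
    have h2 : Real.log (c / (a * X)) = Real.log c - Real.log a - Real.log X := by
      rw [Real.log_div (by positivity) (by positivity), Real.log_mul h.ne' hX.ne']
      ring
    have h4 := mul_le_mul_of_nonneg_left h1 ha
    rw [h2] at h4
    have h3 : a * (c / (a * X) - 1) = c / X - a := by
      field_simp
    rw [h3] at h4
    linarith [h4]

lemma scaled_entropy (a b : ℝ) (ha : 0 ≤ a) (hb : 0 ≤ b) (hc : 0 < a + b) :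
    (a + b) * binEntropy (a / (a + b)) =
      ((a * Real.log (a + b) - a * Real.log a) +
        (b * Real.log (a + b) - b * Real.log b)) / Real.log 2 := by
  have hlog2 : Real.log 2 ≠ 0 := ne_of_gt (Real.log_pos (by norm_num))
  have hne : a + b ≠ 0 := hc.ne'
  have h1 : 1 - a / (a + b) = b / (a + b) := by field_simp; ring
  have ea : -(a * Real.log (a / (a + b))) = a * Real.log (a + b) - a * Real.log a := by
    rcases eq_or_lt_of_le ha with h | h
    · simp [← h]
    · rw [Real.log_div h.ne' hc.ne']; ring
  have eb : -(b * Real.log (b / (a + b))) = b * Real.log (a + b) - b * Real.log b := by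
    rcases eq_or_lt_of_le hb with h | h
    · simp [← h]
    · rw [Real.log_div h.ne' hc.ne']; ring
  rw [← ea, ← eb]
  simp only [binEntropy, h1, Real.logb]
  field_simp
  ring

set_option maxHeartbeats 1000000 in
theorem G_max (m : ℕ) (hm : 1 ≤ m) (φ : ℝ) (hφ : φ ∈ Set.Ioc (1 : ℝ) 2)
    (hroot : φ ^ m - φ ^ (m - 1) - 1 = 0) :
    let G : ℝ → ℝ :=
      fun q => (1 - ((m : ℝ) - 1) * q) * binEntropy (q / (1 - ((m : ℝ) - 1) * q))
    let pminus : ℝ := (φ - 1) / (1 + m * (φ - 1))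
    (∀ q ∈ Set.Icc (0 : ℝ) (1 / m), G q ≤ G pminus) ∧ G pminus = Real.logb 2 φ := by
  intro G pminus
  obtain ⟨hφ1, hφ2⟩ := hφ
  obtain ⟨k, rfl⟩ : ∃ k, m = k + 1 := ⟨m - 1, (Nat.succ_pred_eq_of_pos hm).symm⟩
  set t : ℝ := φ - 1 with htdef
  have ht : 0 < t := by simp [htdef]; linarith
  have hφ0 : 0 < φ := by linarith
  have hk1 : (k + 1 : ℕ) - 1 = k := rfl
  have hpk : (0:ℝ) < φ ^ k := pow_pos hφ0 k
  have hpk1 : (0:ℝ) < φ ^ (k+1) := pow_pos hφ0 (k+1)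
  have hkey : φ ^ k * t = 1 := by
    rw [hk1] at hroot
    have hps : φ ^ (k+1) = φ ^ k * φ := pow_succ φ k
    linear_combination hroot - hps + φ ^ k * htdef
  have hphi : φ ^ (k+1) = φ ^ k + 1 := by
    rw [pow_succ]
    linear_combination hkey - φ ^ k * htdef
  have hD : (0:ℝ) < 1 + ((k+1 : ℕ) : ℝ) * t := by
    have : ((k+1 : ℕ) : ℝ) > 0 := by positivity
    nlinarith
  set D : ℝ := 1 + ((k+1 : ℕ) : ℝ) * t with hDdef
  have hlog2 : (0:ℝ) < Real.log 2 := Real.log_pos (by norm_num)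
  have hlogt : Real.log t = -(k * Real.log φ) := by
    have : t = (φ ^ k)⁻¹ := by
      field_simp
      linarith [hkey]
    rw [this, Real.log_inv, Real.log_pow]
  have hmcast : ((k+1 : ℕ) : ℝ) - 1 = (k : ℝ) := by push_cast; ring
  have hc_pm : 1 - (((k+1 : ℕ) : ℝ) - 1) * pminus = φ / D := by
    rw [hmcast]
    simp only [pminus]
    rw [← hDdef]
    field_simp
    rw [hDdef]
    push_cast
    ring
  have hpm : pminus = t / D := rfl
  have hφD : φ / D = t / D + 1 / D := by
    rw [← add_div, htdef]; ring_nf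
  -- value at pminus
  have hval : G pminus = Real.logb 2 φ := by
    show (1 - (((k+1 : ℕ) : ℝ) - 1) * pminus) *
        binEntropy (pminus / (1 - (((k+1 : ℕ) : ℝ) - 1) * pminus)) = Real.logb 2 φ
    rw [hc_pm, hpm, hφD]
    rw [scaled_entropy (t / D) (1 / D) (by positivity) (by positivity)
      (by rw [← hφD]; positivity)]
    rw [← hφD]
    have l1 : Real.log (φ / D) = Real.log φ - Real.log D := Real.log_div hφ0.ne' hD.ne'
    have l2 : Real.log (t / D) = -(k * Real.log φ) - Real.log D := by
      rw [Real.log_div ht.ne' hD.ne', hlogt]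
    have l3 : Real.log ((1:ℝ) / D) = -Real.log D := by
      rw [one_div, Real.log_inv]
    rw [l1, l2, l3, Real.logb]
    rw [div_eq_div_iff hlog2.ne' hlog2.ne']
    have hDne : D ≠ 0 := hD.ne'
    field_simp
    rw [hDdef]
    push_cast
    ring
  refine ⟨?_, hval⟩
  intro q hq
  rw [hval]
  obtain ⟨hq0, hq1⟩ := hq
  have hmpos : (0:ℝ) < ((k+1 : ℕ) : ℝ) := by positivity
  have hq1' : ((k+1 : ℕ) : ℝ) * q ≤ 1 := by
    rw [le_div_iff₀ hmpos] at hq1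
    calc ((k+1 : ℕ) : ℝ) * q = q * ((k+1 : ℕ) : ℝ) := by ring
      _ ≤ 1 := hq1
  set b : ℝ := 1 - ((k+1 : ℕ) : ℝ) * q with hbdef
  clear_value b
  have hb : 0 ≤ b := by rw [hbdef]; linarith [hq1']
  have hcq : 1 - (((k+1 : ℕ) : ℝ) - 1) * q = q + b := by
    rw [hbdef]; ring
  have hc : 0 < q + b := by
    rw [hbdef]
    have hk0 : (0:ℝ) ≤ (k:ℝ) := by positivity
    have h1 : (k:ℝ) * q ≤ (k:ℝ) * (1 / ((k+1:ℕ):ℝ)) :=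
      mul_le_mul_of_nonneg_left hq1 hk0
    have h2 : (k:ℝ) * (1 / ((k+1:ℕ):ℝ)) < 1 := by
      rw [mul_one_div, div_lt_one hmpos]
      push_cast; linarith
    push_cast at h1 h2 ⊢
    nlinarith
  show (1 - (((k+1 : ℕ) : ℝ) - 1) * q) *
      binEntropy (q / (1 - (((k+1 : ℕ) : ℝ) - 1) * q)) ≤ Real.logb 2 φ
  rw [hcq, scaled_entropy q b hq0 hb hc, Real.logb]
  have hone : (q + b) / φ ^ (k+1) + (q + b) / φ = q + b := by
    rw [div_add_div _ _ hpk1.ne' hφ0.ne', div_eq_iff (by positivity), hphi]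
    linear_combination (q + b) * φ ^ k * htdef - (q + b) * hkey
  have k1 := key_ineq q (q + b) (φ ^ (k+1)) hq0 hc hpk1
  have k2 := key_ineq b (q + b) φ hb hc hφ0
  rw [Real.log_pow] at k1
  have hqb : ((k+1 : ℕ) : ℝ) * q + b = 1 := by rw [hbdef]; ring
  have hsum : (q * Real.log (q + b) - q * Real.log q) +
      (b * Real.log (q + b) - b * Real.log b) ≤ Real.log φ := by
    push_cast at k1 hqb
    have h5 : q * (((k:ℝ) + 1) * Real.log φ) = (1 - b) * Real.log φ := by
      linear_combination Real.log φ * hqb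
    linarith [k1, k2, hone, h5]
  exact (div_le_div_iff_of_pos_right hlog2).mpr hsum
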